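/- Let W₀ be a finite Weyl group acting on the coweight lattice, μ a dominant coweight, and let x ∈ W̃ = X_* ⋊ W₀ be an element of the admissible set Adm(μ) of codimension 1 (length ℓ(t_μ) − 1) such that x ≤ t_{ν₁} and x ≤ t_{ν₂} for the only two maximal elements above x, with ν₁ antidominant. Write x = s₁ t_{ν₁} for an affine reflection s₁. Then ν₂ = s(ν₁) for the linear reflection s that is the image of s₁ in W₀, and ν₁ ≠ ν₂ provided x lies below two distinct maximal elements. -/

import Mathlib

open scoped RealInnerProductSpace

/-- An affine reflection of a Euclidean space with unit normal `u` and constant `c`. -/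
def IsAffineReflectionWith {V : Type*} [NormedAddCommGroup V] [InnerProductSpace ℝ V]
    (s : V → V) (u : V) (c : ℝ) : Prop :=
  ‖u‖ = 1 ∧ ∀ x, s x = x - (2 * (⟪x, u⟫ - c)) • u

/-- In the extended affine Weyl group `W̃` (realized as a group acting
faithfully by affine transformations on the Euclidean space `V`, with translation
elements `t ν`), suppose the codimension-one element `x` satisfies `x = s₁ * t ν₁` and
`x = s₂ * t ν₂` for affine reflections `s₁, s₂` and the two maximal elements
`t ν₁ ≠ t ν₂` above `x`, where `ν₁, ν₂` lie in the `W₀`-orbit `Λ(μ)` (in particular have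
the same length).  Then `ν₁ ≠ ν₂` and `ν₂ = s(ν₁)`, where `s` is the linear reflection
that is the image of `s₁` in `W₀` (i.e. the linear part of `s₁`, reflection in the
unit normal `u` of its fixed hyperplane). -/
theorem codim_one_weights_exchanged_by_linear_reflection
    {V : Type*} [NormedAddCommGroup V] [InnerProductSpace ℝ V] [FiniteDimensional ℝ V]
    {W : Type*} [Group W]
    (ρ : W →* Equiv.Perm V) (hfaith : Function.Injective ρ)
    (t : V → W) (ht : ∀ ν v, ρ (t ν) v = v + ν)
    (s₁ s₂ : W) (u₁ u₂ : V) (c₁ c₂ : ℝ)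
    (h₁ : IsAffineReflectionWith (ρ s₁) u₁ c₁)
    (h₂ : IsAffineReflectionWith (ρ s₂) u₂ c₂)
    (ν₁ ν₂ : V) (hlen : ‖ν₁‖ = ‖ν₂‖)
    (x : W) (hx₁ : x = s₁ * t ν₁) (hx₂ : x = s₂ * t ν₂)
    (hdist : t ν₁ ≠ t ν₂) :
    ν₁ ≠ ν₂ ∧ ν₂ = ν₁ - (2 * ⟪ν₁, u₁⟫) • u₁ := by
  have hne : ν₁ ≠ ν₂ := fun h => hdist (by rw [h])
  have hg : s₁ * t ν₁ = s₂ * t ν₂ := hx₁.symm.trans hx₂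
  have key : ∀ v : V, (ρ s₁) (v + ν₁) = (ρ s₂) (v + ν₂) := by
    intro v
    have := congrArg (fun w => (ρ w) v) hg
    simpa [map_mul, Equiv.Perm.mul_apply, ht] using this
  have key' : ∀ v : V,
      (v + ν₁) - (2 * (⟪v + ν₁, u₁⟫ - c₁)) • u₁
        = (v + ν₂) - (2 * (⟪v + ν₂, u₂⟫ - c₂)) • u₂ := by
    intro v
    rw [← h₁.2, ← h₂.2]; exact key v
  have h0 : ν₁ - (2 * (⟪ν₁, u₁⟫ - c₁)) • u₁ = ν₂ - (2 * (⟪ν₂, u₂⟫ - c₂)) • u₂ := by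
    simpa using key' 0
  have lin : ∀ v : V, (⟪v, u₁⟫ : ℝ) • u₁ = (⟪v, u₂⟫ : ℝ) • u₂ := by
    intro v
    have hv := key' v
    rw [inner_add_left, inner_add_left] at hv
    -- subtract h0 from hv
    have h := congrArg₂ (fun a b : V => a - b) hv h0
    have e1 : ((v + ν₁) - (2 * (⟪v, u₁⟫ + ⟪ν₁, u₁⟫ - c₁)) • u₁)
        - (ν₁ - (2 * (⟪ν₁, u₁⟫ - c₁)) • u₁) = v - (2 * ⟪v, u₁⟫) • u₁ := by
      module
    have e2 : ((v + ν₂) - (2 * (⟪v, u₂⟫ + ⟪ν₂, u₂⟫ - c₂)) • u₂)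
        - (ν₂ - (2 * (⟪ν₂, u₂⟫ - c₂)) • u₂) = v - (2 * ⟪v, u₂⟫) • u₂ := by
      module
    rw [e1, e2] at h
    have h' : (2 * ⟪v, u₁⟫) • u₁ = (2 * ⟪v, u₂⟫) • u₂ := sub_right_injective h
    have : ((2:ℝ))⁻¹ • ((2 * ⟪v, u₁⟫) • u₁) = ((2:ℝ))⁻¹ • ((2 * ⟪v, u₂⟫) • u₂) := by rw [h']
    simpa [smul_smul] using this
  have hu1u1 : (⟪u₁, u₁⟫ : ℝ) = 1 := by
    rw [real_inner_self_eq_norm_sq, h₁.1]; norm_num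
  set k : ℝ := ⟪u₁, u₂⟫ with hk
  have hu : u₁ = k • u₂ := by
    have := lin u₁
    rwa [hu1u1, one_smul] at this
  have hu₁ne : u₁ ≠ 0 := by
    intro h
    have h1 := h₁.1
    rw [h, norm_zero] at h1
    exact one_ne_zero h1.symm
  have hkne : k ≠ 0 := by
    intro h
    apply hu₁ne
    rw [hu, h, zero_smul]
  have hu2 : u₂ = k⁻¹ • u₁ := by
    rw [hu, smul_smul, inv_mul_cancel₀ hkne, one_smul]
  set A : ℝ := 2 * (⟪ν₁, u₁⟫ - c₁) with hA
  set B : ℝ := 2 * (⟪ν₂, u₂⟫ - c₂) with hB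
  set a : ℝ := -A + B * k⁻¹ with ha
  have hν : ν₂ = ν₁ + a • u₁ := by
    have h5 : ν₂ = ν₁ - A • u₁ + B • u₂ := by rw [h0]; module
    have h6 : B • u₂ = (B * k⁻¹) • u₁ := by rw [hu2, smul_smul]
    rw [h5, h6, ha]; module
  have hnorm : (⟪ν₂, ν₂⟫ : ℝ) = ⟪ν₁, ν₁⟫ := by
    rw [real_inner_self_eq_norm_sq, real_inner_self_eq_norm_sq, hlen]
  have hquad : a * (a + 2 * ⟪ν₁, u₁⟫) = 0 := by
    have expand : (⟪ν₂, ν₂⟫ : ℝ) = ⟪ν₁, ν₁⟫ + 2 * a * ⟪ν₁, u₁⟫ + a * a := by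
      rw [hν]
      simp only [inner_add_add_self, real_inner_smul_left, real_inner_smul_right, hu1u1,
        real_inner_comm ν₁ u₁]
      ring
    have := hnorm
    rw [expand] at this
    nlinarith [this]
  have hane : a ≠ 0 := by
    intro h
    apply hne
    rw [hν, h, zero_smul, add_zero]
  have haval : a = -(2 * ⟪ν₁, u₁⟫) := by
    rcases mul_eq_zero.mp hquad with h | h
    · exact absurd h hane
    · linarith
  refine ⟨hne, ?_⟩
  rw [hν, haval]
  module
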